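/- Let R be a unital ring admitting an element r such that the inner derivation ad_r(s) = rs - sr is surjective. Then the matrix ring R₃ of 3×3 matrices over R is the sum of three subrings S_u, S_ℓ, and U S_u U⁻¹, each of which is nilpotent of index 3, where S_u (resp. S_ℓ) is the ring of strictly upper (resp. strictly lower) triangular matrices and U is a fixed invertible matrix. -/
import Mathlib

private lemma upper3 {R : Type*} [Ring R] (X₁ X₂ X₃ : Matrix (Fin 3) (Fin 3) R)
    (h1 : ∀ i j : Fin 3, j ≤ i → X₁ i j = 0) (h2 : ∀ i j : Fin 3, j ≤ i → X₂ i j = 0)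
    (h3 : ∀ i j : Fin 3, j ≤ i → X₃ i j = 0) : X₁ * X₂ * X₃ = 0 := by
  have z1 : ∀ i, X₁ i 0 = 0 := fun i => h1 i 0 (Fin.zero_le i)
  have z2a : X₂ 1 0 = 0 := h2 1 0 (by decide)
  have z2b : X₂ 1 1 = 0 := h2 1 1 le_rfl
  have z2c : ∀ j, X₂ 2 j = 0 := fun j => h2 2 j (Fin.le_last j)
  have z3 : ∀ j, X₃ 2 j = 0 := fun j => h3 2 j (Fin.le_last j)
  ext i j
  simp [Matrix.mul_apply, Fin.sum_univ_three, z1, z2a, z2b, z2c, z3]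

private lemma lower3 {R : Type*} [Ring R] (Y₁ Y₂ Y₃ : Matrix (Fin 3) (Fin 3) R)
    (h1 : ∀ i j : Fin 3, i ≤ j → Y₁ i j = 0) (h2 : ∀ i j : Fin 3, i ≤ j → Y₂ i j = 0)
    (h3 : ∀ i j : Fin 3, i ≤ j → Y₃ i j = 0) : Y₁ * Y₂ * Y₃ = 0 := by
  have z1 : ∀ i, Y₁ i 2 = 0 := fun i => h1 i 2 (Fin.le_last i)
  have z2a : Y₂ 1 1 = 0 := h2 1 1 le_rfl
  have z2b : Y₂ 1 2 = 0 := h2 1 2 (by decide)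
  have z2c : ∀ j, Y₂ 0 j = 0 := fun j => h2 0 j (Fin.zero_le j)
  have z3 : ∀ j, Y₃ 0 j = 0 := fun j => h3 0 j (Fin.zero_le j)
  ext i j
  simp [Matrix.mul_apply, Fin.sum_univ_three, z1, z2a, z2b, z2c, z3]

private lemma decomp3 {R : Type*} [Ring R] (A M : Matrix (Fin 3) (Fin 3) R)
    (hd : ∀ i, M i i = A i i) :
    ∃ X Y : Matrix (Fin 3) (Fin 3) R,
      (∀ i j : Fin 3, j ≤ i → X i j = 0) ∧ (∀ i j : Fin 3, i ≤ j → Y i j = 0) ∧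
      A = X + Y + M := by
  refine ⟨Matrix.of fun i j => if i < j then A i j - M i j else 0,
          Matrix.of fun i j => if j < i then A i j - M i j else 0, ?_, ?_, ?_⟩
  · intro i j hij; simp [Matrix.of_apply, not_lt.mpr hij]
  · intro i j hij; simp [Matrix.of_apply, not_lt.mpr hij]
  · ext i j
    rcases lt_trichotomy i j with hlt | heq | hgt
    · have h' : ¬ j < i := not_lt.mpr hlt.le
      simp only [Matrix.add_apply, Matrix.of_apply, if_pos hlt, if_neg h', add_zero, zero_add]
      abel
    · subst heq
      simp [Matrix.add_apply, Matrix.of_apply, hd i]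
    · have h' : ¬ i < j := not_lt.mpr hgt.le
      simp only [Matrix.add_apply, Matrix.of_apply, if_pos hgt, if_neg h', add_zero, zero_add]
      abel

theorem stmt_11 (R : Type*) [Ring R]
    (h : ∃ r : R, Function.Surjective (fun s => r * s - s * r)) :
    ∃ U V : Matrix (Fin 3) (Fin 3) R,
      U * V = 1 ∧ V * U = 1 ∧
      (∀ A : Matrix (Fin 3) (Fin 3) R, ∃ X Y Z : Matrix (Fin 3) (Fin 3) R,
        (∀ i j : Fin 3, j ≤ i → X i j = 0) ∧
        (∀ i j : Fin 3, i ≤ j → Y i j = 0) ∧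
        (∀ i j : Fin 3, j ≤ i → Z i j = 0) ∧
        A = X + Y + U * Z * V) ∧
      (∀ X₁ X₂ X₃ : Matrix (Fin 3) (Fin 3) R,
        (∀ i j : Fin 3, j ≤ i → X₁ i j = 0) → (∀ i j : Fin 3, j ≤ i → X₂ i j = 0) →
        (∀ i j : Fin 3, j ≤ i → X₃ i j = 0) → X₁ * X₂ * X₃ = 0) ∧
      (∀ Y₁ Y₂ Y₃ : Matrix (Fin 3) (Fin 3) R,
        (∀ i j : Fin 3, i ≤ j → Y₁ i j = 0) → (∀ i j : Fin 3, i ≤ j → Y₂ i j = 0) →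
        (∀ i j : Fin 3, i ≤ j → Y₃ i j = 0) → Y₁ * Y₂ * Y₃ = 0) := by
  obtain ⟨r, hr⟩ := h
  refine ⟨!![1,0,0; r,1,0; r-1,1,1], !![1,0,0; -r,1,0; 1,-1,1], ?_, ?_, ?_, upper3, lower3⟩
  · ext i j
    fin_cases i <;> fin_cases j <;>
      simp [Matrix.mul_apply, Fin.sum_univ_three, Matrix.one_apply, Matrix.vecHead, Matrix.vecTail] <;> noncomm_ring
  · ext i j
    fin_cases i <;> fin_cases j <;>
      simp [Matrix.mul_apply, Fin.sum_univ_three, Matrix.one_apply, Matrix.vecHead, Matrix.vecTail] <;> noncomm_ring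
  · intro A
    obtain ⟨z, hz⟩ := hr (A 0 0 + A 1 1 + A 2 2)
    simp only at hz
    have hd : ∀ i : Fin 3,
        (!![1,0,0; r,1,0; r-1,1,1] *
          !![0, z, r*z - A 1 1 - A 2 2;
             0, 0, r*z - r*(r*z - A 1 1 - A 2 2) - A 1 1;
             0, 0, 0] *
          !![1,0,0; -r,1,0; 1,-1,1]) i i = A i i := by
      have h0 : A 0 0 = r * z - z * r - A 1 1 - A 2 2 := by rw [hz]; abel
      intro i
      fin_cases i
      · simp [Matrix.mul_apply, Fin.sum_univ_three]
        rw [h0]; abel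
      · simp [Matrix.mul_apply, Fin.sum_univ_three]
        noncomm_ring
      · simp [Matrix.mul_apply, Fin.sum_univ_three]
        noncomm_ring
    obtain ⟨X, Y, hX, hY, hA⟩ := decomp3 A _ hd
    refine ⟨X, Y, _, hX, hY, ?_, hA⟩
    intro i j hij
    fin_cases i <;> fin_cases j <;> (try exact absurd hij (by decide)) <;> simp [Matrix.vecHead, Matrix.vecTail]
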